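/- Let B_s ⊆ B_w be normed spaces of signed measures with ‖·‖_w ≤ ‖·‖_s, and let L : B_w → B_w be a linear operator preserving B_s. Suppose: (i) ‖L μ‖_w ≤ ‖μ‖_w for all μ ∈ B_s (weak contraction); (ii) there exist A, B₂ > 0 and 0 < λ < 1 with ‖Lⁿ μ‖_s ≤ A λⁿ ‖μ‖_s + B₂ ‖μ‖_w for all n ≥ 1 and μ ∈ B_s (Lasota–Yorke); (iii) there exist D₂ > 0 and 0 < β₁ < 1 with ‖Lⁿ μ‖_w ≤ D₂ β₁ⁿ ‖μ‖_s for all μ in the subspace V_s of zero-average measures in B_s (convergence to equilibrium), and V_s is L-invariant. Then there exist K₁ > 0 and 0 < ξ < 1 such that ‖Lⁿ μ‖_s ≤ K₁ ξⁿ ‖μ‖_s for all n ≥ 1 and all μ ∈ V_s; one can take ξ = √(max{λ, β₁}). -/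

import Mathlib

/-- from weak contraction, a Lasota–Yorke inequality, and convergence to
equilibrium on the `L`-invariant subspace `Vs` of zero-average measures, one gets uniform
exponential contraction of `L` on `Vs` in the strong norm, with rate
`ξ = √(max {λ, β₁})`.  Here `B` carries the strong norm `‖·‖` and `w` is the weak norm,
with `w ≤ ‖·‖`. -/
theorem stmt7 {B : Type*} [NormedAddCommGroup B] [NormedSpace ℝ B]
    (w : B → ℝ) (hw0 : ∀ μ, 0 ≤ w μ) (hws : ∀ μ, w μ ≤ ‖μ‖)
    (L : B →ₗ[ℝ] B)
    (hweak : ∀ μ, w (L μ) ≤ w μ)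
    (A B₂ lam : ℝ) (hA : 0 < A) (hB₂ : 0 < B₂) (hlam0 : 0 < lam) (hlam1 : lam < 1)
    (hLY : ∀ (n : ℕ), 1 ≤ n → ∀ μ, ‖(L ^ n) μ‖ ≤ A * lam ^ n * ‖μ‖ + B₂ * w μ)
    (Vs : Submodule ℝ B) (hVinv : ∀ μ ∈ Vs, L μ ∈ Vs)
    (D₂ β₁ : ℝ) (hD₂ : 0 < D₂) (hβ₁0 : 0 < β₁) (hβ₁1 : β₁ < 1)
    (hconv : ∀ μ ∈ Vs, ∀ n : ℕ, w ((L ^ n) μ) ≤ D₂ * β₁ ^ n * ‖μ‖) :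
    ∃ K₁ : ℝ, 0 < K₁ ∧ 0 < Real.sqrt (max lam β₁) ∧ Real.sqrt (max lam β₁) < 1 ∧
      ∀ (n : ℕ), 1 ≤ n → ∀ μ ∈ Vs, ‖(L ^ n) μ‖ ≤ K₁ * Real.sqrt (max lam β₁) ^ n * ‖μ‖ := by

  set ρ : ℝ := max lam β₁ with hρdef
  have hρ0 : 0 < ρ := lt_max_of_lt_left hlam0
  have hρ1 : ρ < 1 := max_lt hlam1 hβ₁1
  set ξ : ℝ := Real.sqrt ρ with hξdef
  have hξ0 : 0 < ξ := Real.sqrt_pos.2 hρ0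
  have hξsq : ξ ^ 2 = ρ := Real.sq_sqrt hρ0.le
  have hξ1 : ξ < 1 := by
    nlinarith [hξsq, hξ0]
  refine ⟨A * (A + B₂ + 1) + B₂ * D₂ / ξ, by positivity, hξ0, hξ1, ?_⟩
  intro n hn μ hμ
  set k := n / 2 with hk
  set m := n - k with hm
  have hm1 : 1 ≤ m := by omega
  have h2m : n ≤ 2 * m := by omega
  have h2k : n - 1 ≤ 2 * k := by omega
  set ν := (L ^ k) μ with hν
  have hsplit : (L ^ n) μ = (L ^ m) ν := by
    have : L ^ n = L ^ m * L ^ k := by rw [← pow_add]; congr 1; omega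
    rw [this]; rfl
  have hμ0 : (0:ℝ) ≤ ‖μ‖ := norm_nonneg μ
  -- bound ‖ν‖ ≤ (A + B₂ + 1) * ‖μ‖
  have hνbd : ‖ν‖ ≤ (A + B₂ + 1) * ‖μ‖ := by
    rcases Nat.eq_zero_or_pos k with hk0 | hk1
    · rw [hν, hk0, pow_zero]
      simp only [Module.End.one_apply]
      nlinarith
    · have h1 := hLY k hk1 μ
      have h2 := hws μ
      have hlk : lam ^ k ≤ 1 := pow_le_one₀ hlam0.le hlam1.le
      rw [hν]
      nlinarith [mul_nonneg hA.le hμ0]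
  -- weak bound on ν
  have hνw : w ν ≤ D₂ * β₁ ^ k * ‖μ‖ := hconv μ hμ k
  -- power inequalities
  have hpow1 : lam ^ m ≤ ξ ^ n := by
    calc lam ^ m ≤ ρ ^ m := pow_le_pow_left₀ hlam0.le (le_max_left _ _) m
      _ = ξ ^ (2 * m) := by rw [pow_mul, hξsq]
      _ ≤ ξ ^ n := pow_le_pow_of_le_one hξ0.le hξ1.le h2m
  have hξn1 : ξ ^ (n - 1) = ξ ^ n / ξ := by
    rw [eq_div_iff hξ0.ne', ← pow_succ]
    congr 1; omega
  have hpow2 : β₁ ^ k ≤ ξ ^ n / ξ := by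
    calc β₁ ^ k ≤ ρ ^ k := pow_le_pow_left₀ hβ₁0.le (le_max_right _ _) k
      _ = ξ ^ (2 * k) := by rw [pow_mul, hξsq]
      _ ≤ ξ ^ (n - 1) := pow_le_pow_of_le_one hξ0.le hξ1.le h2k
      _ = ξ ^ n / ξ := hξn1
  have hLYm := hLY m hm1 ν
  rw [hsplit]
  have hlm0 : (0:ℝ) ≤ lam ^ m := by positivity
  have hν0 : (0:ℝ) ≤ ‖ν‖ := norm_nonneg ν
  have hwν0 : (0:ℝ) ≤ w ν := hw0 ν
  calc ‖(L ^ m) ν‖ ≤ A * lam ^ m * ‖ν‖ + B₂ * w ν := hLYm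
    _ ≤ A * lam ^ m * ((A + B₂ + 1) * ‖μ‖) + B₂ * (D₂ * β₁ ^ k * ‖μ‖) := by
        gcongr
    _ ≤ A * (ξ ^ n) * ((A + B₂ + 1) * ‖μ‖) + B₂ * (D₂ * (ξ ^ n / ξ) * ‖μ‖) := by
        gcongr
    _ = (A * (A + B₂ + 1) + B₂ * D₂ / ξ) * ξ ^ n * ‖μ‖ := by
        field_simp
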